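/- For each p ∈ (1, ∞] there exist ε ∈ (0, 1/2) and a function f ∈ ℓ^p(ℤ) such that the set { n ∈ ℤ : r_n/|n| ∈ [ε, 1-ε] } is unbounded. (For 1 < p < ∞ one may take f(n) = n^{-α} ∑_k 𝟙_{I_k}(n) with αp > 1 and suitable sparse blocks I_k; for p = ∞ take f = ∑_k 𝟙_{I_k}.) -/

import Mathlib

open scoped BigOperators ENNReal

noncomputable def discAvg (f : ℤ → ℝ) (r : ℕ) (n : ℤ) : ℝ :=
  (∑ j ∈ Finset.Icc (-(r : ℤ)) (r : ℤ), |f (n + j)|) / (2 * r + 1)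

noncomputable def discMax (f : ℤ → ℝ) (n : ℤ) : ℝ := ⨆ r : ℕ, discAvg f r n

noncomputable def discFreq (f : ℤ → ℝ) (n : ℤ) : ℕ :=
  sInf {r : ℕ | discMax f n = discAvg f r n}

namespace Stmt19Aux
open Finset

open scoped Classical in
noncomputable def bf (α : ℝ) (B : ℕ) (m : ℤ) : ℝ :=
  if ∃ k : ℕ, 1 ≤ k ∧ (B:ℤ)^k + 1 ≤ m ∧ m ≤ 2*(B:ℤ)^k then (m:ℝ) ^ (-α) else 0

lemma bf_of_mem {α : ℝ} {B : ℕ} {m : ℤ} {k : ℕ} (hk : 1 ≤ k)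
    (h1 : (B:ℤ)^k + 1 ≤ m) (h2 : m ≤ 2*(B:ℤ)^k) : bf α B m = (m:ℝ) ^ (-α) := by
  rw [bf, if_pos ⟨k, hk, h1, h2⟩]

lemma bf_nonneg (α : ℝ) (B : ℕ) (m : ℤ) : 0 ≤ bf α B m := by
  rw [bf]; split
  · rename_i h
    obtain ⟨k, hk, h1, h2⟩ := h
    have hm : (0:ℤ) ≤ m := le_trans (by positivity) h1
    exact Real.rpow_nonneg (by exact_mod_cast hm) _
  · exact le_rfl

lemma discAvg_eq_sum (f : ℤ → ℝ) (r : ℕ) (n : ℤ) :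
    discAvg f r n = (∑ m ∈ Finset.Icc (n - (r:ℤ)) (n + (r:ℤ)), |f m|) / (2 * r + 1) := by
  have h : ∑ m ∈ Finset.Icc (n - (r:ℤ)) (n + (r:ℤ)), |f m|
      = ∑ j ∈ Finset.Icc (-(r : ℤ)) (r : ℤ), |f (n + j)| := by
    have e : Finset.Icc (n - (r:ℤ)) (n + (r:ℤ))
        = (Finset.Icc (-(r:ℤ)) (r:ℤ)).map (addLeftEmbedding n) := by
      rw [Finset.map_add_left_Icc, sub_eq_add_neg]
    rw [e, Finset.sum_map]
    apply Finset.sum_congr rfl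
    intro j _
    simp [addLeftEmbedding_apply]
  rw [discAvg, h]

lemma lt_of_step (F : ℕ → ℝ) (a : ℕ) :
    ∀ b, (∀ m, a ≤ m → m < b → F m < F (m+1)) → ∀ m, a ≤ m → m < b → F m < F b := by
  intro b
  induction b with
  | zero => intro _ m _ h; omega
  | succ c ih =>
    intro hstep m hm hmb
    rcases Nat.lt_or_ge m c with h | h
    · exact lt_trans (ih (fun x hx hxc => hstep x hx (by omega)) m hm h)
        (hstep c (by omega) (by omega))
    · have : m = c := by omega
      subst this
      exact hstep m hm hmb

lemma sum_window {α : ℝ} {B : ℕ} (hB : 2 ≤ B) {k : ℕ} (hk : 1 ≤ k) {a b : ℤ}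
    (ha : 2*(B:ℤ)^(k-1) < a) (hb : b < (B:ℤ)^(k+1) + 1) :
    ∑ m ∈ Icc a b, bf α B m
      = ∑ m ∈ Icc (max a ((B:ℤ)^k + 1)) (min b (2*(B:ℤ)^k)), (m:ℝ)^(-α) := by
  have hB1 : (1:ℤ) ≤ (B:ℤ) := by exact_mod_cast (by omega : 1 ≤ B)
  have hsub : Icc (max a ((B:ℤ)^k + 1)) (min b (2*(B:ℤ)^k)) ⊆ Icc a b := by
    intro m hm
    rw [mem_Icc] at hm ⊢
    exact ⟨le_trans (le_max_left _ _) hm.1, le_trans hm.2 (min_le_left _ _)⟩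
  rw [← Finset.sum_subset hsub]
  · apply Finset.sum_congr rfl
    intro m hm
    rw [mem_Icc, max_le_iff, le_min_iff] at hm
    exact bf_of_mem hk hm.1.2 hm.2.2
  · intro m hmt hms
    rw [mem_Icc] at hmt
    rw [bf, if_neg]
    rintro ⟨j, hj, hj1, hj2⟩
    rcases lt_trichotomy j k with h | h | h
    · have : (B:ℤ)^j ≤ (B:ℤ)^(k-1) := pow_le_pow_right₀ hB1 (by omega)
      have : m ≤ 2*(B:ℤ)^(k-1) := le_trans hj2 (by linarith)
      linarith [hmt.1]
    · subst h
      apply hms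
      rw [mem_Icc, max_le_iff, le_min_iff]
      exact ⟨⟨hmt.1, hj1⟩, hmt.2, hj2⟩
    · have : (B:ℤ)^(k+1) ≤ (B:ℤ)^j := pow_le_pow_right₀ hB1 (by omega)
      linarith [hmt.2, hj1]

lemma rpow_pow_eq {B : ℕ} (hB : 1 ≤ B) (c : ℝ) (j : ℕ) :
    ((B:ℝ)^c)^j = (B:ℝ)^(c * j) := by
  have h0 : (0:ℝ) ≤ (B:ℝ) := by positivity
  rw [← Real.rpow_natCast ((B:ℝ)^c) j, ← Real.rpow_mul h0]

lemma g_pow_eq {B : ℕ} (hB : 1 ≤ B) (α : ℝ) (j : ℕ) :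
    (((B:ℤ)^j : ℤ) : ℝ)^(-α) = ((B:ℝ)^(-α))^j := by
  have h0 : (0:ℝ) ≤ (B:ℝ) := by positivity
  have h1 : (((B:ℤ)^j : ℤ) : ℝ) = (B:ℝ)^j := by push_cast; ring
  rw [h1, rpow_pow_eq hB, ← Real.rpow_natCast (B:ℝ) j, ← Real.rpow_mul h0]
  ring_nf

lemma x_mul_gamma {B : ℕ} (hB : 1 ≤ B) (α : ℝ) (k : ℕ) :
    ((B:ℝ))^k * ((B:ℝ)^(-α))^k = ((B:ℝ)^(1-α))^k := by
  have h0 : (0:ℝ) < (B:ℝ) := by exact_mod_cast (by omega : 0 < B)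
  rw [rpow_pow_eq hB, rpow_pow_eq hB, ← Real.rpow_natCast (B:ℝ) k,
      ← Real.rpow_add h0]
  ring_nf

lemma gamma_le {B : ℕ} (hB : 4096 ≤ B) {α : ℝ} (hα : 3/4 ≤ α) :
    (B:ℝ)^(-α) ≤ 1/512 := by
  have hB1 : (1:ℝ) ≤ (B:ℝ) := by exact_mod_cast (by omega : 1 ≤ B)
  have h1 : (B:ℝ)^(-α) ≤ (B:ℝ)^(-(3/4 : ℝ)) :=
    Real.rpow_le_rpow_of_exponent_le hB1 (by linarith)
  have h2 : (B:ℝ)^(-(3/4:ℝ)) ≤ (4096:ℝ)^(-(3/4:ℝ)) :=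
    Real.rpow_le_rpow_of_nonpos (by norm_num) (by exact_mod_cast hB) (by norm_num)
  have h3 : (4096:ℝ)^(-(3/4:ℝ)) = 1/512 := by
    have : (4096:ℝ) = (8:ℝ)^(4:ℕ) := by norm_num
    rw [this, ← Real.rpow_natCast (8:ℝ) 4, ← Real.rpow_mul (by norm_num)]
    norm_num
  linarith

set_option maxHeartbeats 2000000 in
lemma key {α : ℝ} {B : ℕ} (hB : 4096 ≤ B) (hα : 3/4 ≤ α) (hα1 : α < 1)
    (hβ : 9 ≤ (B:ℝ) ^ (1 - α)) (k : ℕ) (hk : 1 ≤ k) :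
    discFreq (bf α B) (3*(B:ℤ)^k) = 2*B^k - 1 := by
  have hα0 : (0:ℝ) ≤ α := by linarith
  have hB1 : (1:ℤ) ≤ (B:ℤ) := by exact_mod_cast (by omega : 1 ≤ B)
  have hB1' : (1:ℕ) ≤ B := by omega
  have hB2 : (2:ℕ) ≤ B := by omega
  have hBZ : (4096:ℤ) ≤ (B:ℤ) := by exact_mod_cast hB
  set bk : ℤ := (B:ℤ)^k with hbk
  set n : ℤ := 3*bk with hn
  set K : ℕ := B^k with hK
  have hKbk : (K:ℤ) = bk := by push_cast [hK, hbk]; ring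
  have hbk1 : (1:ℤ) ≤ bk := one_le_pow₀ hB1
  have hbkprev1 : (1:ℤ) ≤ (B:ℤ)^(k-1) := one_le_pow₀ hB1
  have hprev : (B:ℤ)^(k-1) * B = bk := by
    rw [hbk, ← pow_succ]
    congr 1
    omega
  have hprev' : 4096*(B:ℤ)^(k-1) ≤ bk := by nlinarith
  have hnext : bk * B = (B:ℤ)^(k+1) := by rw [hbk, ← pow_succ]
  have hnext' : 4096*bk ≤ (B:ℤ)^(k+1) := by nlinarith
  -- the g function
  set g : ℤ → ℝ := fun m => (m:ℝ)^(-α) with hg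
  have hganti : ∀ a m : ℤ, 0 < a → a ≤ m → g m ≤ g a := by
    intro a m ha h
    exact Real.rpow_le_rpow_of_nonpos (by exact_mod_cast ha) (by exact_mod_cast h) (by linarith)
  have hgpos : ∀ a : ℤ, 0 < a → 0 < g a := by
    intro a ha
    exact Real.rpow_pos_of_pos (by exact_mod_cast ha) _
  have hgnn : ∀ a : ℤ, 0 ≤ a → 0 ≤ g a := by
    intro a ha
    exact Real.rpow_nonneg (by exact_mod_cast ha) _
  -- window sums
  set N : ℕ → ℝ := fun r => ∑ m ∈ Icc (n - (r:ℤ)) (n + (r:ℤ)), bf α B m with hN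
  set A : ℕ → ℝ := fun r => discAvg (bf α B) r n with hA
  have hAN : ∀ r : ℕ, A r = N r / (2*(r:ℝ)+1) := by
    intro r
    simp only [hA]
    rw [discAvg_eq_sum]
    congr 1
    apply Finset.sum_congr rfl
    intro m _
    exact abs_of_nonneg (bf_nonneg α B m)
  set Nstar : ℝ := ∑ m ∈ Icc (bk+1) (2*bk), g m with hNstar
  set rstar : ℕ := 2*K - 1 with hrstar
  have hK1 : 1 ≤ K := by
    have := hbk1
    omega
  have hrstarZ : ((rstar:ℕ):ℤ) = 2*bk - 1 := by
    have : ((rstar:ℕ):ℤ) = 2*(K:ℤ) - 1 := by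
      rw [hrstar]
      push_cast [Nat.cast_sub (by omega : 1 ≤ 2*K)]
      ring
    rw [this, hKbk]
  -- single-block window identity
  have hwin : ∀ r : ℕ, (r:ℤ) + 2*(B:ℤ)^(k-1) + 1 ≤ 3*bk →
      N r = ∑ m ∈ Icc (max (n - (r:ℤ)) (bk + 1)) (2*bk), g m := by
    intro r hr
    have h1 : 2*(B:ℤ)^(k-1) < n - (r:ℤ) := by omega
    have h2 : n + (r:ℤ) < (B:ℤ)^(k+1) + 1 := by omega
    simp only [hN]
    rw [sum_window hB2 hk h1 h2]
    rw [min_eq_right (by omega : 2*bk ≤ n + (r:ℤ))]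
  -- case: r < bk
  have hzero : ∀ r : ℕ, (r:ℤ) < bk → N r = 0 := by
    intro r hr
    rw [hwin r (by omega)]
    rw [max_eq_left (by omega : bk + 1 ≤ n - (r:ℤ))]
    rw [Finset.Icc_eq_empty (by omega : ¬ (n - (r:ℤ)) ≤ 2*bk), Finset.sum_empty]
  -- case: bk ≤ r ≤ 2bk-1
  have hval : ∀ r : ℕ, bk ≤ (r:ℤ) → (r:ℤ) ≤ 2*bk - 1 →
      N r = ∑ m ∈ Icc (n - (r:ℤ)) (2*bk), g m := by
    intro r h1 h2
    rw [hwin r (by omega)]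
    rw [max_eq_left (by omega : bk + 1 ≤ n - (r:ℤ))]
  -- case: flat region
  have hflatN : ∀ r : ℕ, 2*bk - 1 ≤ (r:ℤ) → (r:ℤ) + 2*(B:ℤ)^(k-1) + 1 ≤ 3*bk →
      N r = Nstar := by
    intro r h1 h2
    rw [hwin r h2, max_eq_right (by omega : n - (r:ℤ) ≤ bk + 1)]
  have hrstar_flat : N rstar = Nstar := by
    apply hflatN <;> omega
  have hNstar_pos : 0 < Nstar := by
    rw [hNstar]
    apply Finset.sum_pos
    · intro m hm
      rw [mem_Icc] at hm
      exact hgpos m (by omega)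
    · exact ⟨bk+1, by rw [mem_Icc]; omega⟩
  have hcard : ∀ a b : ℤ, a ≤ b + 1 → ((Icc a b).card : ℝ) = ((b + 1 - a : ℤ) : ℝ) := by
    intro a b h
    rw [Int.card_Icc]
    rw [show ((b + 1 - a).toNat : ℝ) = (((b + 1 - a).toNat : ℤ) : ℝ) by push_cast; ring]
    rw [Int.toNat_of_nonneg (by omega)]
  have hsum_le : ∀ a b : ℤ, 0 < a → ∑ m ∈ Icc a b, g m ≤ ((Icc a b).card : ℝ) * g a := by
    intro a b ha
    calc ∑ m ∈ Icc a b, g m ≤ (Icc a b).card • g a := by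
          apply Finset.sum_le_card_nsmul
          intro m hm
          rw [mem_Icc] at hm
          exact hganti a m ha hm.1
      _ = ((Icc a b).card : ℝ) * g a := by rw [nsmul_eq_mul]
  have hsum_ge : ∀ a b : ℤ, 0 < a → ((Icc a b).card : ℝ) * g b ≤ ∑ m ∈ Icc a b, g m := by
    intro a b ha
    calc ((Icc a b).card : ℝ) * g b = (Icc a b).card • g b := by rw [nsmul_eq_mul]
      _ ≤ ∑ m ∈ Icc a b, g m := by
          apply Finset.card_nsmul_le_sum
          intro m hm
          rw [mem_Icc] at hm
          exact hganti m b (by omega) hm.2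
  -- real constants
  set γ : ℝ := (B:ℝ)^(-α) with hγ
  set βr : ℝ := (B:ℝ)^(1-α) with hβr
  set x : ℝ := (K:ℝ) with hx
  have hxBk : x = ((B:ℝ))^k := by rw [hx, hK]; push_cast; ring
  have hx1 : (4096:ℝ) ≤ x := by
    rw [hxBk]
    calc (4096:ℝ) ≤ (B:ℝ) := by exact_mod_cast hB
      _ = (B:ℝ)^1 := (pow_one (B:ℝ)).symm
      _ ≤ (B:ℝ)^k := pow_le_pow_right₀ (by exact_mod_cast hB1) hk
  have hx1' : (1:ℝ) ≤ x := by linarith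
  have hγ0 : 0 ≤ γ := Real.rpow_nonneg (by positivity) _
  have hγle : γ ≤ 1/512 := gamma_le hB hα
  have hβr9 : 9 ≤ βr := hβ
  have hγk : ∀ j : ℕ, g ((B:ℤ)^j) = γ^j := fun j => g_pow_eq hB1' α j
  have hxγβ : x * γ^k = βr^k := by rw [hxBk, hγ, hβr]; exact x_mul_gamma hB1' α k
  have hγkpos : (0:ℝ) ≤ γ^k := pow_nonneg hγ0 k
  -- Nstar lower bound
  have hNstar_lb : βr^k ≤ 2 * Nstar := by
    have hcard2 : ((Icc (bk+1) (2*bk)).card : ℝ) = x := by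
      rw [hcard _ _ (by omega), show (2*bk + 1 - (bk+1)) = bk by ring, ← hKbk, hx]
      push_cast
      ring
    have h1 : x * g (2*bk) ≤ Nstar := by
      rw [hNstar, ← hcard2]
      exact hsum_ge (bk+1) (2*bk) (by omega)
    have h2 : g (2*bk) = 2^(-α) * γ^k := by
      rw [hg]
      simp only
      rw [show ((2*bk : ℤ):ℝ) = 2 * ((bk:ℤ):ℝ) by push_cast; ring]
      rw [Real.mul_rpow (by norm_num) (by exact_mod_cast (by omega : (0:ℤ) ≤ bk))]
      congr 1
      rw [hbk]
      exact hγk k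
    have h3 : (1/2 : ℝ) ≤ 2^(-α) := by
      have h4 := Real.rpow_le_rpow_of_exponent_le (by norm_num : (1:ℝ) ≤ 2) (by linarith : -(1:ℝ) ≤ -α)
      rw [Real.rpow_neg_one] at h4
      linarith
    calc βr^k = x * γ^k := hxγβ.symm
      _ = 2 * (x * ((1/2) * γ^k)) := by ring
      _ ≤ 2 * (x * (2^(-α) * γ^k)) := by
          apply mul_le_mul_of_nonneg_left _ (by norm_num)
          apply mul_le_mul_of_nonneg_left _ (by linarith)
          exact mul_le_mul_of_nonneg_right h3 hγkpos
      _ = 2 * (x * g (2*bk)) := by rw [h2]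
      _ ≤ 2 * Nstar := by linarith
  -- value at rstar
  have hrstarR : ((rstar:ℕ):ℝ) = 2*x - 1 := by
    rw [hrstar, hx]
    push_cast [Nat.cast_sub (by omega : 1 ≤ 2*K)]
    ring
  have hAstar : A rstar = Nstar / (4*x - 1) := by
    rw [hAN, hrstar_flat, hrstarR]
    congr 1
    ring
  have hAstar_pos : 0 < A rstar := by
    rw [hAstar]
    exact div_pos hNstar_pos (by linarith)
  -- strict monotone steps
  have hstep : ∀ r : ℕ, bk ≤ (r:ℤ) → (r:ℤ) < 2*bk - 1 → A r < A (r+1) := by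
    intro r h1 h2
    have hv1 : N r = ∑ m ∈ Icc (n - (r:ℤ)) (2*bk), g m := hval r h1 (by omega)
    have hv2 : N (r+1) = ∑ m ∈ Icc (n - (r:ℤ) - 1) (2*bk), g m := by
      rw [hval (r+1) (by push_cast; omega) (by push_cast; omega)]
      congr 2
      push_cast
      ring
    have hsplit : Icc (n - (r:ℤ) - 1) (2*bk) = insert (n - (r:ℤ) - 1) (Icc (n - (r:ℤ)) (2*bk)) := by
      ext m
      simp only [Finset.mem_insert, mem_Icc]
      omega
    have hnotmem : (n - (r:ℤ) - 1) ∉ Icc (n - (r:ℤ)) (2*bk) := by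
      rw [mem_Icc]; omega
    have hv3 : N (r+1) = g (n - (r:ℤ) - 1) + N r := by
      rw [hv2, hsplit, Finset.sum_insert hnotmem, hv1]
    have hvpos : 0 < g (n - (r:ℤ) - 1) := hgpos _ (by omega)
    have hwv : g (n - (r:ℤ)) ≤ g (n - (r:ℤ) - 1) := hganti _ _ (by omega) (by omega)
    have hrx : x ≤ (r:ℝ) := by
      have h5 : (K:ℤ) ≤ (r:ℤ) := by omega
      rw [hx]
      exact_mod_cast h5
    have hNle : N r ≤ ((r:ℝ) - x + 1) * g (n - (r:ℤ) - 1) := by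
      have hcardr : ((Icc (n - (r:ℤ)) (2*bk)).card : ℝ) = (r:ℝ) - x + 1 := by
        rw [hcard _ _ (by omega), show (2*bk + 1 - (n - (r:ℤ))) = (r:ℤ) - (K:ℤ) + 1 by rw [hKbk]; omega]
        rw [hx]
        push_cast
        ring
      calc N r ≤ ((Icc (n - (r:ℤ)) (2*bk)).card : ℝ) * g (n - (r:ℤ)) := by
            rw [hv1]; exact hsum_le _ _ (by omega)
        _ = ((r:ℝ) - x + 1) * g (n - (r:ℤ)) := by rw [hcardr]
        _ ≤ ((r:ℝ) - x + 1) * g (n - (r:ℤ) - 1) := by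
            apply mul_le_mul_of_nonneg_left hwv
            linarith
    have hd1 : (0:ℝ) < 2*(r:ℝ)+1 := by positivity
    have hd2 : (0:ℝ) < 2*(((r+1):ℕ):ℝ)+1 := by push_cast; positivity
    have hprod : 0 < (2*x - 1) * g (n - (r:ℤ) - 1) := mul_pos (by linarith) hvpos
    have h2N : 2 * N r < g (n - (r:ℤ) - 1) * (2*(r:ℝ)+1) := by nlinarith [hNle, hprod]
    rw [hAN, hAN, div_lt_div_iff₀ hd1 hd2, hv3]
    push_cast
    nlinarith [h2N]
  -- flat region bound
  have hflatA : ∀ r : ℕ, rstar ≤ r → (r:ℤ) + 2*(B:ℤ)^(k-1) + 1 ≤ 3*bk → A r ≤ A rstar := by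
    intro r h1 h2
    have h1' : (2:ℤ)*bk - 1 ≤ (r:ℤ) := by
      rw [← hrstarZ]
      exact_mod_cast h1
    rw [hAN, hAN, hrstar_flat, hflatN r h1' h2]
    have hd1 : (0:ℝ) < 2*(r:ℝ)+1 := by positivity
    have hd2 : (0:ℝ) < 2*((rstar:ℕ):ℝ)+1 := by positivity
    rw [div_le_div_iff₀ hd1 hd2]
    have : ((rstar:ℕ):ℝ) ≤ (r:ℝ) := by exact_mod_cast h1
    nlinarith [hNstar_pos]
  -- far region
  have hfar : ∀ r : ℕ, 3*bk - 2*(B:ℤ)^(k-1) ≤ (r:ℤ) → A r < A rstar := by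
    intro r hr
    have hr2 : 2*bk ≤ (r:ℤ) := by omega
    set J : ℕ := k + r with hJ
    set W : Finset ℤ := Icc (n - (r:ℤ)) (n + (r:ℤ)) with hW
    set T : ℕ → Finset ℤ := fun j => Icc ((B:ℤ)^j + 1) (2*(B:ℤ)^j) ∩ W with hT
    have hNW : N r = ∑ m ∈ W, bf α B m := rfl
    have hpowr : ((r:ℤ)+2) ≤ (B:ℤ)^(r+1) := by
      have h6 : (r+1 : ℕ) < B^(r+1) := Nat.lt_pow_self (by omega : 1 < B)
      exact_mod_cast h6
    have hstepA : N r = ∑ m ∈ (Icc 1 J).biUnion T, bf α B m := by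
      rw [hNW]
      symm
      apply Finset.sum_subset
      · intro m hm
        rw [Finset.mem_biUnion] at hm
        obtain ⟨j, _, hj⟩ := hm
        rw [hT] at hj
        exact Finset.mem_of_mem_inter_right hj
      · intro m hmW hmB
        rw [bf, if_neg]
        rintro ⟨j, hj1, hj2, hj3⟩
        apply hmB
        rw [Finset.mem_biUnion]
        refine ⟨j, ?_, ?_⟩
        · rw [Finset.mem_Icc]
          refine ⟨hj1, ?_⟩
          by_contra hcon
          push_neg at hcon
          have h7 : (B:ℤ)^(k + (r+1)) ≤ (B:ℤ)^j := pow_le_pow_right₀ hB1 (by omega)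
          have h8 : (B:ℤ)^(k + (r+1)) = bk * (B:ℤ)^(r+1) := by rw [hbk, pow_add]
          have h9 : m ≤ n + (r:ℤ) := (Finset.mem_Icc.mp hmW).2
          nlinarith [hj2, hpowr, hbk1]
        · rw [hT]
          exact Finset.mem_inter.mpr ⟨Finset.mem_Icc.mpr ⟨hj2, hj3⟩, hmW⟩
    have hdisj : ∀ i j : ℕ, i < j → Disjoint (T i) (T j) := by
      intro i j hij
      rw [Finset.disjoint_left]
      intro m hmi hmj
      rw [hT, Finset.mem_inter, Finset.mem_Icc] at hmi hmj
      have h7 : (B:ℤ)^(i+1) ≤ (B:ℤ)^j := pow_le_pow_right₀ hB1 (by omega)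
      have h8 : (B:ℤ)^(i+1) = (B:ℤ)^i * B := by rw [pow_succ]
      have h9 : (1:ℤ) ≤ (B:ℤ)^i := one_le_pow₀ hB1
      nlinarith [hmi.1.2, hmj.1.1]
    have hstepB : N r = ∑ j ∈ Icc 1 J, ∑ m ∈ T j, bf α B m := by
      rw [hstepA]
      apply Finset.sum_biUnion
      intro i hi j hj hij
      rcases Nat.lt_or_ge i j with h | h
      · exact hdisj i j h
      · exact (hdisj j i (by omega : j < i)).symm
    have hTblock : ∀ j, 1 ≤ j → ∑ m ∈ T j, bf α B m = ∑ m ∈ T j, g m := by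
      intro j hj
      apply Finset.sum_congr rfl
      intro m hm
      rw [hT, Finset.mem_inter, Finset.mem_Icc] at hm
      exact bf_of_mem hj hm.1.1 hm.1.2
    have hstepB2 : N r = ∑ j ∈ Icc 1 J, ∑ m ∈ T j, g m := by
      rw [hstepB]
      apply Finset.sum_congr rfl
      intro j hj
      rw [Finset.mem_Icc] at hj
      exact hTblock j hj.1
    have hfullcard : ∀ j : ℕ, ((Icc ((B:ℤ)^j + 1) (2*(B:ℤ)^j)).card : ℝ) = (B:ℝ)^j := by
      intro j
      have hc1 : (1:ℤ) ≤ (B:ℤ)^j := one_le_pow₀ hB1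
      rw [hcard _ _ (by omega), show 2*(B:ℤ)^j + 1 - ((B:ℤ)^j+1) = (B:ℤ)^j by ring]
      push_cast
      ring
    have hTle : ∀ j, 1 ≤ j → ∑ m ∈ T j, g m ≤ (B:ℝ)^j * γ^j := by
      intro j hj
      have hc1 : (0:ℤ) < (B:ℤ)^j := by positivity
      have hBj0 : (0:ℝ) ≤ (B:ℝ)^j := by positivity
      calc ∑ m ∈ T j, g m ≤ ∑ m ∈ Icc ((B:ℤ)^j + 1) (2*(B:ℤ)^j), g m := by
            apply Finset.sum_le_sum_of_subset_of_nonneg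
            · rw [hT]
              exact Finset.inter_subset_left
            · intro m hm _
              rw [Finset.mem_Icc] at hm
              exact hgnn m (by omega)
        _ ≤ ((Icc ((B:ℤ)^j + 1) (2*(B:ℤ)^j)).card : ℝ) * g ((B:ℤ)^j + 1) := hsum_le _ _ (by omega)
        _ = (B:ℝ)^j * g ((B:ℤ)^j + 1) := by rw [hfullcard j]
        _ ≤ (B:ℝ)^j * γ^j := by
            apply mul_le_mul_of_nonneg_left _ hBj0
            rw [← hγk j]
            exact hganti _ _ (by omega) (by omega)
    have hβrj : ∀ j : ℕ, (B:ℝ)^j * γ^j = βr^j := by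
      intro j
      rw [hγ, hβr]
      exact x_mul_gamma hB1' α j
    have hTk : ∑ m ∈ T k, g m ≤ Nstar := by
      rw [hNstar]
      apply Finset.sum_le_sum_of_subset_of_nonneg
      · rw [hT]
        exact Finset.inter_subset_left
      · intro m hm _
        rw [Finset.mem_Icc] at hm
        exact hgnn m (by omega)
    have hTfar : ∀ j, k+1 ≤ j → ∑ m ∈ T j, g m ≤ (2*(r:ℝ)) * γ^j := by
      intro j hj1
      rcases Finset.eq_empty_or_nonempty (T j) with he | hne
      · rw [he, Finset.sum_empty]
        positivity
      · obtain ⟨m, hm⟩ := hne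
        rw [hT, Finset.mem_inter, Finset.mem_Icc, Finset.mem_Icc] at hm
        have h7 : (B:ℤ)^j + 1 ≤ n + (r:ℤ) := le_trans hm.1.1 hm.2.2
        have h8 : bk ≤ (B:ℤ)^(j-1) := by
          rw [hbk]
          exact pow_le_pow_right₀ hB1 (by omega)
        have h9 : (B:ℤ)^(j-1) * B = (B:ℤ)^j := by
          rw [← pow_succ]
          congr 1
          omega
        have h10 : 6*bk ≤ (B:ℤ)^j := by nlinarith
        have h11 : (B:ℤ)^j ≤ 2*(r:ℤ) := by omega
        calc ∑ m ∈ T j, g m ≤ (B:ℝ)^j * γ^j := hTle j (by omega)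
          _ ≤ (2*(r:ℝ)) * γ^j := by
              apply mul_le_mul_of_nonneg_right _ (pow_nonneg hγ0 j)
              exact_mod_cast h11
    -- split the sum at k
    have hkJ : k ≤ J := by omega
    have hsplit : ∑ j ∈ Icc 1 J, (∑ m ∈ T j, g m)
        = (∑ j ∈ Icc 1 (k-1), ∑ m ∈ T j, g m) + (∑ m ∈ T k, g m)
          + (∑ j ∈ Icc (k+1) J, ∑ m ∈ T j, g m) := by
      set F : ℕ → ℝ := fun j => ∑ m ∈ T j, g m with hF
      have e1 : Icc 1 J = Ioc 0 J := Finset.Icc_add_one_left_eq_Ioc ..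
      have e2 : Icc (k+1) J = Ioc k J := Finset.Icc_add_one_left_eq_Ioc ..
      have e3 : Icc 1 (k-1) = Ioc 0 (k-1) := Finset.Icc_add_one_left_eq_Ioc ..
      have c1 : ∑ j ∈ Ioc 0 (k-1), F j + ∑ j ∈ Ioc (k-1) k, F j = ∑ j ∈ Ioc 0 k, F j :=
        Finset.sum_Ioc_consecutive F (by omega) (by omega)
      have c2 : ∑ j ∈ Ioc 0 k, F j + ∑ j ∈ Ioc k J, F j = ∑ j ∈ Ioc 0 J, F j :=
        Finset.sum_Ioc_consecutive F (by omega) hkJ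
      have e4 : Ioc (k-1) k = {k} := by
        ext j
        simp only [Finset.mem_Ioc, Finset.mem_singleton]
        omega
      rw [e1, ← c2, ← c1, e4, Finset.sum_singleton, e2, e3]
    have hβrpos : (0:ℝ) < βr := by linarith
    have hgeom1 : ∑ j ∈ Icc 1 (k-1), ∑ m ∈ T j, g m ≤ βr^k / 8 := by
      calc ∑ j ∈ Icc 1 (k-1), ∑ m ∈ T j, g m ≤ ∑ j ∈ Icc 1 (k-1), βr^j := by
            apply Finset.sum_le_sum
            intro j hj
            rw [Finset.mem_Icc] at hj
            rw [← hβrj j]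
            exact hTle j hj.1
        _ ≤ ∑ j ∈ Finset.range k, βr^j := by
            apply Finset.sum_le_sum_of_subset_of_nonneg
            · intro j hj
              rw [Finset.mem_Icc] at hj
              rw [Finset.mem_range]
              omega
            · intro j _ _
              positivity
        _ = (βr^k - 1)/(βr - 1) := geom_sum_eq (by linarith : βr ≠ 1) k
        _ ≤ βr^k / 8 := by
            rw [div_le_div_iff₀ (by linarith) (by norm_num)]
            have h12 : (1:ℝ) ≤ βr^k := one_le_pow₀ (by linarith)
            nlinarith [pow_nonneg (le_of_lt hβrpos) k]
    have hgeom2 : ∑ j ∈ Icc (k+1) J, ∑ m ∈ T j, g m ≤ 2*(r:ℝ) * (2 * γ^(k+1)) := by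
      calc ∑ j ∈ Icc (k+1) J, ∑ m ∈ T j, g m ≤ ∑ j ∈ Icc (k+1) J, (2*(r:ℝ)) * γ^j := by
            apply Finset.sum_le_sum
            intro j hj
            rw [Finset.mem_Icc] at hj
            exact hTfar j hj.1
        _ = (2*(r:ℝ)) * ∑ j ∈ Icc (k+1) J, γ^j := by rw [Finset.mul_sum]
        _ ≤ (2*(r:ℝ)) * (2 * γ^(k+1)) := by
            apply mul_le_mul_of_nonneg_left _ (by positivity)
            have hre : ∑ j ∈ Icc (k+1) J, γ^j = γ^(k+1) * ∑ i ∈ Finset.range (J - k), γ^i := by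
              rw [← Finset.Ico_add_one_right_eq_Icc, Finset.sum_Ico_eq_sum_range, show J + 1 - (k+1) = J - k by omega, Finset.mul_sum]
              apply Finset.sum_congr rfl
              intro i _
              rw [pow_add]
            rw [hre]
            have hg2 : ∑ i ∈ Finset.range (J-k), γ^i ≤ 2 := by
              rw [geom_sum_eq (by linarith : γ ≠ 1)]
              rw [div_le_iff_of_neg (by linarith : γ - 1 < 0)]
              nlinarith [pow_nonneg hγ0 (J-k)]
            calc γ^(k+1) * ∑ i ∈ Finset.range (J-k), γ^i ≤ γ^(k+1) * 2 :=
                  mul_le_mul_of_nonneg_left hg2 (pow_nonneg hγ0 _)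
              _ = 2 * γ^(k+1) := by ring
    have hNbound : N r ≤ Nstar + βr^k/8 + 4*(r:ℝ)*γ^(k+1) := by
      rw [hstepB2, hsplit]
      nlinarith [hTk, hgeom1, hgeom2]
    -- numeric finish
    have hxpos : (0:ℝ) < x := by linarith
    have hγk1 : γ^(k+1) ≤ (1/512) * γ^k := by
      rw [pow_succ]
      calc γ^k * γ ≤ γ^k * (1/512) := mul_le_mul_of_nonneg_left hγle hγkpos
        _ = (1/512) * γ^k := by ring
    have hγkx : γ^k ≤ 2*Nstar/x := by
      rw [le_div_iff₀ hxpos]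
      calc γ^k * x = x * γ^k := by ring
        _ = βr^k := hxγβ
        _ ≤ 2*Nstar := hNstar_lb
    have hNbound2 : N r ≤ (5/4)*Nstar + (r:ℝ)*Nstar/(64*x) := by
      have t1 : βr^k/8 ≤ Nstar/4 := by linarith [hNstar_lb]
      have t2 : 4*(r:ℝ)*γ^(k+1) ≤ 4*(r:ℝ)*((1/512)*(2*Nstar/x)) := by
        apply mul_le_mul_of_nonneg_left _ (by positivity)
        calc γ^(k+1) ≤ (1/512)*γ^k := hγk1
          _ ≤ (1/512)*(2*Nstar/x) := by
              apply mul_le_mul_of_nonneg_left hγkx (by norm_num)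
      have t3 : 4*(r:ℝ)*((1/512)*(2*Nstar/x)) = (r:ℝ)*Nstar/(64*x) := by
        field_simp
        ring
      linarith [hNbound]
    have hyx : ((B:ℝ))^(k-1) ≤ x/4096 := by
      have hc2 : ((4096*(B:ℤ)^(k-1) : ℤ) : ℝ) ≤ ((bk : ℤ) : ℝ) := by exact_mod_cast hprev'
      have hc3 : ((bk : ℤ) : ℝ) = x := by rw [hx, ← hKbk]; push_cast; ring
      rw [hc3] at hc2
      push_cast at hc2 ⊢
      linarith
    have hrR : 3*x - x/2048 ≤ (r:ℝ) := by
      have hc2 : ((3*bk - 2*(B:ℤ)^(k-1) : ℤ) : ℝ) ≤ ((r:ℤ) : ℝ) := by exact_mod_cast hr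
      have hc3 : ((bk : ℤ) : ℝ) = x := by rw [hx, ← hKbk]; push_cast; ring
      push_cast at hc2
      rw [hc3] at hc2
      push_cast
      linarith [hyx]
    have hfinal_lin : 5*x + (r:ℝ)/16 < 2*(r:ℝ)+1 := by linarith
    have hdr : (0:ℝ) < 2*(r:ℝ)+1 := by positivity
    have h4x : (0:ℝ) < 4*x - 1 := by linarith
    rw [hAN, hAstar, div_lt_div_iff₀ hdr h4x]
    calc N r * (4*x-1) ≤ ((5/4)*Nstar + (r:ℝ)*Nstar/(64*x))*(4*x-1) := by
          apply mul_le_mul_of_nonneg_right hNbound2 (by linarith)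
      _ ≤ (5/4)*Nstar*(4*x) + ((r:ℝ)*Nstar/(64*x))*(4*x) := by
          have n1 : 0 ≤ (5/4)*Nstar := by linarith
          have n2 : 0 ≤ (r:ℝ)*Nstar/(64*x) := by positivity
          nlinarith
      _ = Nstar*(5*x + (r:ℝ)/16) := by
          field_simp
          ring
      _ < Nstar*(2*(r:ℝ)+1) := by
          exact mul_lt_mul_of_pos_left hfinal_lin hNstar_pos
  -- global comparison
  have hlt : ∀ r : ℕ, r < rstar → A r < A rstar := by
    intro r hrlt
    rcases lt_or_ge ((r:ℤ)) bk with h | h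
    · have hz : A r = 0 := by
        rw [hAN, hzero r h]
        simp
      rw [hz]
      exact hAstar_pos
    · refine lt_of_step A K rstar ?_ r ?_ hrlt
      · intro m hm1 hm2
        apply hstep m
        · have : (K:ℤ) ≤ (m:ℤ) := by exact_mod_cast hm1
          omega
        · have : (m:ℤ) < ((rstar:ℕ):ℤ) := by exact_mod_cast hm2
          omega
      · have : (K:ℤ) ≤ (r:ℤ) := by omega
        exact_mod_cast this
  have hle : ∀ r : ℕ, A r ≤ A rstar := by
    intro r
    rcases lt_or_ge r rstar with h | h
    · exact (hlt r h).le
    · rcases le_or_gt ((r:ℤ) + 2*(B:ℤ)^(k-1) + 1) (3*bk) with h2 | h2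
      · exact hflatA r h h2
      · exact (hfar r (by omega)).le
  have h1 : ∀ r : ℕ, discAvg (bf α B) r n = A r := fun r => by simp only [hA]
  have hbdd : BddAbove (Set.range (fun r : ℕ => discAvg (bf α B) r n)) := by
    refine ⟨A rstar, ?_⟩
    rintro v ⟨r, rfl⟩
    exact (h1 r).le.trans (hle r)
  have hmax : discMax (bf α B) n = A rstar := by
    unfold discMax
    apply le_antisymm
    · exact ciSup_le (fun r => (h1 r).le.trans (hle r))
    · calc A rstar = discAvg (bf α B) rstar n := (h1 rstar).symm
        _ ≤ ⨆ r : ℕ, discAvg (bf α B) r n := le_ciSup hbdd rstar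
  have hfreq : discFreq (bf α B) n = rstar := by
    unfold discFreq
    have hmem : rstar ∈ {r : ℕ | discMax (bf α B) n = discAvg (bf α B) r n} := by
      show discMax (bf α B) n = discAvg (bf α B) rstar n
      rw [hmax, h1 rstar]
    apply le_antisymm
    · exact Nat.sInf_le hmem
    · apply le_csInf ⟨rstar, hmem⟩
      intro m hm
      by_contra hcon
      push_neg at hcon
      have hlt2 : A m < A rstar := hlt m hcon
      have hm' : discMax (bf α B) n = discAvg (bf α B) m n := hm
      rw [hmax, h1 m] at hm'
      linarith [hlt2, hm'.le]
  exact hfreq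





lemma bf_norm_le_one {α : ℝ} {B : ℕ} (hα0 : 0 ≤ α) (m : ℤ) : ‖bf α B m‖ ≤ 1 := by
  rw [Real.norm_eq_abs, abs_of_nonneg (bf_nonneg α B m), bf]
  split
  · rename_i h
    obtain ⟨k, hk, h1, h2⟩ := h
    apply Real.rpow_le_one_of_one_le_of_nonpos
    · refine le_trans ?_ (by exact_mod_cast h1 : ((B:ℤ)^k : ℝ) + 1 ≤ (m:ℝ))
      have h3 : (0:ℝ) ≤ ((B:ℤ)^k : ℝ) := by positivity
      linarith
    · linarith
  · norm_num

lemma summable_bf {α : ℝ} {B : ℕ} (hα0 : 0 ≤ α) {pr : ℝ} (hpr : 0 < pr) (hαpr : 1 < α * pr) :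
    Summable (fun m : ℤ => ‖bf α B m‖ ^ pr) := by
  refine Summable.of_nonneg_of_le (fun m => Real.rpow_nonneg (norm_nonneg _) pr)
    (fun m => ?_) (Real.summable_abs_int_rpow hαpr)
  rw [Real.norm_eq_abs, abs_of_nonneg (bf_nonneg α B m), bf]
  split
  · rename_i h
    obtain ⟨k, hk, h1, h2⟩ := h
    have hm1 : (1:ℤ) ≤ m := by
      have h3 : (0:ℤ) ≤ (B:ℤ)^k := by positivity
      omega
    have hm0 : (0:ℝ) ≤ (m:ℝ) := by exact_mod_cast le_trans zero_le_one hm1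
    rw [← Real.rpow_mul hm0, abs_of_nonneg hm0]
    apply le_of_eq
    ring_nf
  · rw [Real.zero_rpow (ne_of_gt hpr)]
    positivity

end Stmt19Aux

open Stmt19Aux in
theorem stmt19 (p : ℝ≥0∞) (hp : 1 < p) :
    ∃ ε : ℝ, 0 < ε ∧ ε < 1 / 2 ∧ ∃ f : ℤ → ℝ, Memℓp f p ∧
      {n : ℤ | ε ≤ (discFreq f n : ℝ) / |(n : ℝ)| ∧
        (discFreq f n : ℝ) / |(n : ℝ)| ≤ 1 - ε}.Infinite := by
  classical
  set pr : ℝ := if p = ⊤ then 2 else p.toReal with hpr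
  have hpr1 : 1 < pr := by
    rw [hpr]
    split
    · norm_num
    · rename_i h
      have h2 : (1:ℝ≥0∞).toReal < p.toReal := by
        rw [ENNReal.toReal_lt_toReal (by simp) h]
        exact hp
      simpa using h2
  set q0 : ℝ := min pr 2 with hq0
  have hq01 : 1 < q0 := lt_min hpr1 one_lt_two
  have hq02 : q0 ≤ 2 := min_le_right _ _
  have hq0pr : q0 ≤ pr := min_le_left _ _
  set α : ℝ := (1 + 1/q0)/2 with hαdef
  have hq0pos : 0 < q0 := by linarith
  have hinv2 : (1:ℝ)/2 ≤ 1/q0 := one_div_le_one_div_of_le hq0pos hq02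
  have hinv1 : (1:ℝ)/q0 < 1 := by
    rw [div_lt_one hq0pos]
    exact hq01
  have hα34 : 3/4 ≤ α := by rw [hαdef]; linarith
  have hα1 : α < 1 := by rw [hαdef]; linarith
  have hα0 : 0 ≤ α := by linarith
  have hαpr : 1 < α * pr := by
    have e1 : α * q0 = (q0 + 1)/2 := by
      rw [hαdef]
      field_simp
    have e2 : 1 < α * q0 := by rw [e1]; linarith
    have e3 : α * q0 ≤ α * pr := mul_le_mul_of_nonneg_left hq0pr hα0
    linarith
  set B : ℕ := max 4096 (⌈(9:ℝ)^(1/(1-α))⌉₊ + 1) with hBdef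
  have hB4096 : 4096 ≤ B := le_max_left _ _
  have h1α : (0:ℝ) < 1 - α := by linarith
  have hβ : 9 ≤ (B:ℝ)^(1-α) := by
    have hBge : (9:ℝ)^(1/(1-α)) ≤ (B:ℝ) := by
      have h2 : (9:ℝ)^(1/(1-α)) ≤ (⌈(9:ℝ)^(1/(1-α))⌉₊ : ℝ) := Nat.le_ceil _
      have h3 : (⌈(9:ℝ)^(1/(1-α))⌉₊ : ℕ) ≤ B := by
        rw [hBdef]
        omega
      have h4 : ((⌈(9:ℝ)^(1/(1-α))⌉₊ : ℕ) : ℝ) ≤ (B:ℝ) := by exact_mod_cast h3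
      linarith
    calc (9:ℝ) = ((9:ℝ)^(1/(1-α)))^(1-α) := by
          rw [← Real.rpow_mul (by norm_num), one_div_mul_cancel (ne_of_gt h1α), Real.rpow_one]
      _ ≤ (B:ℝ)^(1-α) := Real.rpow_le_rpow (by positivity) hBge (le_of_lt h1α)
  refine ⟨1/4, by norm_num, by norm_num, bf α B, ?_, ?_⟩
  · -- Memℓp
    rcases eq_or_ne p ⊤ with hptop | hptop
    · subst hptop
      apply memℓp_infty
      refine ⟨1, ?_⟩
      rintro v ⟨m, rfl⟩
      exact bf_norm_le_one hα0 m
    · have hprR : pr = p.toReal := by rw [hpr, if_neg hptop]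
      apply memℓp_gen
      rw [← hprR]
      exact summable_bf hα0 (by linarith) hαpr
  · -- infinite set
    apply Set.infinite_of_injective_forall_mem
      (f := fun k : ℕ => (3*(B:ℤ)^(k+1) : ℤ))
    · intro a b hab
      simp only at hab
      by_contra hne
      have hB1 : (1:ℤ) < (B:ℤ) := by exact_mod_cast (by omega : 1 < B)
      rcases Nat.lt_or_ge a b with h | h
      · have := pow_lt_pow_right₀ hB1 (by omega : a+1 < b+1)
        omega
      · have hba : b < a := by omega
        have := pow_lt_pow_right₀ hB1 (by omega : b+1 < a+1)
        omega
    · intro k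
      have hfreq := key hB4096 hα34 hα1 hβ (k+1) (by omega)
      have hBk1R : (1:ℝ) ≤ (B:ℝ)^(k+1) := one_le_pow₀ (by exact_mod_cast (by omega : 1 ≤ B))
      have hKpos : 1 ≤ B^(k+1) := Nat.one_le_pow _ _ (by omega)
      have hnabs : |((3*(B:ℤ)^(k+1) : ℤ) : ℝ)| = 3*(B:ℝ)^(k+1) := by
        rw [abs_of_nonneg (by positivity)]
        push_cast
        ring
      have hfreqR : ((discFreq (bf α B) (3*(B:ℤ)^(k+1)) : ℕ) : ℝ) = 2*(B:ℝ)^(k+1) - 1 := by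
        rw [hfreq]
        push_cast [Nat.cast_sub (by omega : 1 ≤ 2*B^(k+1))]
        ring
      simp only [Set.mem_setOf_eq]
      constructor
      · rw [hfreqR, hnabs, le_div_iff₀ (by positivity)]
        linarith
      · rw [hfreqR, hnabs, div_le_iff₀ (by positivity)]
        linarith
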